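/- Define Fibonacci numbers by F₀ = 0, F₁ = 1, F_{n+2} = F_{n+1} + F_n. Define rational sequences (x_n), (y_n) by x₀ = 2, y₀ = 6, x₁ = 5, y₁ = 16, and for n ≥ 1: x_{n+1} = (1 + x_n²)/x_{n−1} and y_{n+1} = (−x_{n+1}·y_{n−1} + 2 + 2·x_n·y_n)/x_{n−1}. Then for all n, x_n = F_{2n+3} and y_n = 2·F_{2n+4}; that is, along the Fibonacci branch of the Markoff tree, the shadows arising from the initial shadow triple (0, 2, 1) are twice the even-indexed Fibonacci numbers. -/
import Mathlib


/-- The Fibonacci numbers: `F₀ = 0`, `F₁ = 1`, `F_{n+2} = F_{n+1} + F_n`. -/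
def fib : ℕ → ℚ
  | 0 => 0
  | 1 => 1
  | n + 2 => fib (n + 1) + fib n

lemma fib_add_two (n : ℕ) : fib (n + 2) = fib (n + 1) + fib n := by rw [fib]

lemma fib_nonneg_pos : ∀ n : ℕ, 0 ≤ fib n ∧ 0 < fib (n + 1) := by
  intro n
  induction n with
  | zero => norm_num [fib]
  | succ n ih =>
    refine ⟨le_of_lt ih.2, ?_⟩
    rw [fib_add_two]
    linarith [ih.1, ih.2]

lemma key : ∀ n : ℕ, fib (2*n+3)^2 + fib (2*n+3) * fib (2*n+4) - fib (2*n+4)^2 = 1 := by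
  intro n
  induction n with
  | zero => norm_num [fib]
  | succ n ih =>
    have e5 : fib (2*n+5) = fib (2*n+4) + fib (2*n+3) := fib_add_two (2*n+3)
    have e6 : fib (2*n+6) = fib (2*n+5) + fib (2*n+4) := fib_add_two (2*n+4)
    rw [show 2*(n+1)+3 = 2*n+5 from by ring, show 2*(n+1)+4 = 2*n+6 from by ring,
      e6, e5]
    linear_combination ih

/-- Along the Fibonacci branch of the shadow Markoff tree with initial shadow
triple `(0, 2, 1)`, the real parts are the odd-indexed Fibonacci numbers and
the shadows are twice the even-indexed Fibonacci numbers. -/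
theorem fibonacci_branch_shadow (x y : ℕ → ℚ)
    (hx0 : x 0 = 2) (hy0 : y 0 = 6) (hx1 : x 1 = 5) (hy1 : y 1 = 16)
    (hx : ∀ n, x (n + 2) = (1 + x (n + 1) ^ 2) / x n)
    (hy : ∀ n, y (n + 2) =
      (-(x (n + 2)) * y n + 2 + 2 * x (n + 1) * y (n + 1)) / x n) :
    ∀ n, x n = fib (2 * n + 3) ∧ y n = 2 * fib (2 * n + 4) := by
  have H : ∀ n, (x n = fib (2*n+3) ∧ y n = 2 * fib (2*n+4)) ∧
      (x (n+1) = fib (2*(n+1)+3) ∧ y (n+1) = 2 * fib (2*(n+1)+4)) := by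
    intro n
    induction n with
    | zero => norm_num [hx0, hy0, hx1, hy1, fib]
    | succ n ih =>
      obtain ⟨⟨hxn, hyn⟩, hxn1, hyn1⟩ := ih
      have ha : (0:ℚ) < fib (2*n+3) := (fib_nonneg_pos (2*n+2)).2
      have ha' : fib (2*n+3) ≠ 0 := ne_of_gt ha
      have e5 : fib (2*n+5) = fib (2*n+4) + fib (2*n+3) := fib_add_two (2*n+3)
      have e6 : fib (2*n+6) = fib (2*n+5) + fib (2*n+4) := fib_add_two (2*n+4)
      have e7 : fib (2*n+7) = fib (2*n+6) + fib (2*n+5) := fib_add_two (2*n+5)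
      have e8 : fib (2*n+8) = fib (2*n+7) + fib (2*n+6) := fib_add_two (2*n+6)
      have hk := key n
      have hx2 : x (n+2) = fib (2*n+7) := by
        rw [hx n, hxn, hxn1, show 2*(n+1)+3 = 2*n+5 from by ring]
        rw [div_eq_iff ha', e7, e6, e5]
        linear_combination -hk
      have hy2 : y (n+2) = 2 * fib (2*n+8) := by
        rw [hy n, hx2, hxn, hyn, hxn1, hyn1,
          show 2*(n+1)+3 = 2*n+5 from by ring, show 2*(n+1)+4 = 2*n+6 from by ring]
        rw [div_eq_iff ha', e8, e7, e6, e5]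
        linear_combination -2 * hk
      refine ⟨⟨hxn1, hyn1⟩, ?_, ?_⟩
      · rw [show 2*(n+1+1)+3 = 2*n+7 from by ring]; exact hx2
      · rw [show 2*(n+1+1)+4 = 2*n+8 from by ring]; exact hy2
  intro n
  exact (H n).1
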